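/- arXiv:2509.13851 — 2 statements merged into one kernel-verified Lean document; each statement's English description precedes it below -/
import Mathlib

section
/- Let (u^k, x^k, y^k), k ≥ 1, be the sequence generated by the T-ADMM algorithm with penalty parameter ρ ≥ 2. Then the successive differences vanish: ‖u^k − u^{k+1}‖₂² → 0, ‖x^k − x^{k+1}‖₂² → 0, and ‖y^k − y^{k+1}‖₂² → 0 as k → ∞. -/
open scoped InnerProductSpace RealInnerProductSpace
open Filter

/-- The augmented Lagrangian
`L_ρ(u, x, y) = (1/2)‖u‖₂² + Re(yᴴ(x − x₀ − u)) + (ρ/2)‖x − x₀ − u‖₂²`. -/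
noncomputable def augLag {n : ℕ} (ρ : ℝ) (x₀ u x y : EuclideanSpace ℂ (Fin n)) : ℝ :=
  (1/2) * ‖u‖^2 + (⟪y, x - x₀ - u⟫_ℂ).re + (ρ/2) * ‖x - x₀ - u‖^2

private lemma re_inner_eq {n : ℕ} (a b : EuclideanSpace ℂ (Fin n)) :
    (⟪a, b⟫_ℂ).re = ⟪a, b⟫_ℝ := by
  simp [PiLp.inner_apply, Complex.inner, RCLike.inner_apply, Complex.re_sum]

private lemma augLag_expand {n : ℕ} (ρ : ℝ) (x₀ u yy z w : EuclideanSpace ℂ (Fin n)) :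
    augLag ρ x₀ u z yy - augLag ρ x₀ u w yy
      = ⟪yy + ρ • (w - x₀ - u), z - w⟫_ℝ + (ρ/2) * ‖z - w‖^2 := by
  have h1 : ⟪yy, z - x₀ - u⟫_ℝ = ⟪yy, z - w⟫_ℝ + ⟪yy, w - x₀ - u⟫_ℝ := by
    rw [← inner_add_right]; congr 1; abel
  have h2 : ‖z - x₀ - u‖^2 = ‖z - w‖^2 + 2*⟪z - w, w - x₀ - u⟫_ℝ + ‖w - x₀ - u‖^2 := by
    rw [← @norm_add_sq_real]; congr 1; abel
  have h3 : ⟪yy + ρ • (w - x₀ - u), z - w⟫_ℝ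
      = ⟪yy, z - w⟫_ℝ + ρ * ⟪z - w, w - x₀ - u⟫_ℝ := by
    rw [inner_add_left, real_inner_smul_left, real_inner_comm (w - x₀ - u) (z - w)]
  unfold augLag
  rw [re_inner_eq, re_inner_eq, h1, h2, h3]
  ring

private lemma nonneg_of_forall_seg (A c : ℝ) (hc : 0 ≤ c)
    (h : ∀ t : ℝ, 0 < t → t ≤ 1 → 0 ≤ t * A + t^2 * c) : 0 ≤ A := by
  by_contra hneg
  push_neg at hneg
  have hca : 0 < c + 1 := by linarith
  have ht0 : 0 < min 1 ((-A)/(c+1)) := lt_min one_pos (div_pos (by linarith) hca)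
  have ht1 : min 1 ((-A)/(c+1)) ≤ 1 := min_le_left _ _
  have h2 := h _ ht0 ht1
  set t := min 1 ((-A)/(c+1)) with ht
  have htc : t * (c+1) ≤ -A := by
    have h3 : t ≤ (-A)/(c+1) := min_le_right _ _
    calc t * (c+1) ≤ ((-A)/(c+1)) * (c+1) := mul_le_mul_of_nonneg_right h3 hca.le
      _ = -A := by field_simp
  nlinarith [h2, mul_le_mul_of_nonneg_left htc ht0.le, mul_pos ht0 ht0]

private lemma vi_of_min {n : ℕ} {ρ β : ℝ} (hρ : 0 < ρ)
    {x₀ u yy xp z : EuclideanSpace ℂ (Fin n)}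
    (hxp : ∀ i, ‖xp i‖ ≤ β) (hz : ∀ i, ‖z i‖ ≤ β)
    (hmin : ∀ w : EuclideanSpace ℂ (Fin n), (∀ i, ‖w i‖ ≤ β) →
      augLag ρ x₀ u xp yy ≤ augLag ρ x₀ u w yy) :
    0 ≤ ⟪yy + ρ • (xp - x₀ - u), z - xp⟫_ℝ := by
  have key : ∀ t : ℝ, 0 < t → t ≤ 1 →
      0 ≤ t * ⟪yy + ρ • (xp - x₀ - u), z - xp⟫_ℝ + t^2 * ((ρ/2) * ‖z - xp‖^2) := by
    intro t ht0 ht1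
    have h1t : (0:ℝ) ≤ 1 - t := by linarith
    have hfeas : ∀ i, ‖(xp + t • (z - xp)) i‖ ≤ β := by
      intro i
      have hcoord : (xp + t • (z - xp)) i = (1 - t) • xp i + t • z i := by
        show xp i + t • (z i - xp i) = (1 - t) • xp i + t • z i
        module
      rw [hcoord]
      calc ‖(1 - t) • xp i + t • z i‖
          ≤ ‖(1 - t) • xp i‖ + ‖t • z i‖ := norm_add_le _ _
        _ = (1 - t) * ‖xp i‖ + t * ‖z i‖ := by
            rw [norm_smul, norm_smul, Real.norm_eq_abs,
              Real.norm_eq_abs, abs_of_nonneg h1t, abs_of_nonneg ht0.le]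
        _ ≤ (1 - t) * β + t * β :=
            add_le_add (mul_le_mul_of_nonneg_left (hxp i) h1t)
              (mul_le_mul_of_nonneg_left (hz i) ht0.le)
        _ = β := by ring
    have hmin' := hmin _ hfeas
    have hexp := augLag_expand ρ x₀ u yy (xp + t • (z - xp)) xp
    rw [show xp + t • (z - xp) - xp = t • (z - xp) from by abel,
      real_inner_smul_right, norm_smul, mul_pow, Real.norm_eq_abs, sq_abs] at hexp
    nlinarith [hmin', hexp]
  exact nonneg_of_forall_seg _ _ (by positivity) key

private lemma key_ineq {E : Type*} [NormedAddCommGroup E] [InnerProductSpace ℝ E]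
    (ρ : ℝ) (hρ : 0 < ρ) (q' p' d r e p q : E)
    (hep : e = p' - r) (heq : e = q' - ρ • d) (hq : q = q' - ρ • r) (hp : p = p' - d)
    (hA : ⟪q', p'⟫_ℝ ≤ 0) :
    (1/ρ) * ‖q'‖^2 + ρ * ‖p'‖^2 + (2 * ‖e‖^2 + ρ * ‖e - p‖^2)
      ≤ (1/ρ) * ‖q‖^2 + ρ * ‖p‖^2 := by
  have hρn : ρ ≠ 0 := ne_of_gt hρ
  have h1 : ‖e‖^2 = ⟪q', p'⟫_ℝ - ⟪q', r⟫_ℝ - ρ * ⟪d, p'⟫_ℝ + ρ * ⟪d, r⟫_ℝ := by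
    have h0 : ‖e‖^2 = ⟪q' - ρ • d, p' - r⟫_ℝ := by
      rw [← heq, ← hep, real_inner_self_eq_norm_sq]
    rw [h0, inner_sub_left, inner_sub_right, inner_sub_right, real_inner_smul_left,
      real_inner_smul_left]
    ring
  have h2 : ‖q‖^2 = ‖q'‖^2 - 2 * (ρ * ⟪q', r⟫_ℝ) + ρ^2 * ‖r‖^2 := by
    rw [hq, norm_sub_sq_real, real_inner_smul_right, norm_smul, mul_pow, Real.norm_eq_abs, sq_abs]
  have h3 : ‖p‖^2 = ‖p'‖^2 - 2 * ⟪p', d⟫_ℝ + ‖d‖^2 := by rw [hp, norm_sub_sq_real]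
  have h4 : ‖e - p‖^2 = ‖d‖^2 - 2 * ⟪d, r⟫_ℝ + ‖r‖^2 := by
    have h0 : e - p = d - r := by rw [hep, hp]; abel
    rw [h0, norm_sub_sq_real]
  have hsym : ⟪p', d⟫_ℝ = ⟪d, p'⟫_ℝ := real_inner_comm _ _
  have hid : (1/ρ) * ‖q‖^2 + ρ * ‖p‖^2
      - ((1/ρ) * ‖q'‖^2 + ρ * ‖p'‖^2 + (2 * ‖e‖^2 + ρ * ‖e - p‖^2))
      = -2 * ⟪q', p'⟫_ℝ := by
    rw [h1, h2, h3, h4, hsym]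
    field_simp
    ring
  linarith [hid, hA]
theorem stmt_11 (ρ : ℝ) (hρ : 0 < ρ)
    {n : ℕ} (x₀ : EuclideanSpace ℂ (Fin n)) (β : ℝ) (hβ : 0 < β)
    (u x y : ℕ → EuclideanSpace ℂ (Fin n))
    -- `u`-update: the unique minimizer of `u ↦ L_ρ(u, xᵏ, yᵏ)`
    (hu : ∀ k, 1 ≤ k → u (k+1) = (ρ/(ρ+1)) • (x k - x₀ + ρ⁻¹ • y k))
    -- `x`-update: a minimizer of `x ↦ L_ρ(uᵏ⁺¹, x, yᵏ)` over `X = {x : maxᵢ |xᵢ| ≤ β}`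
    (hxfeas : ∀ k, 1 ≤ k → ∀ i, ‖x (k+1) i‖ ≤ β)
    (hxmin : ∀ k, 1 ≤ k → ∀ z : EuclideanSpace ℂ (Fin n), (∀ i, ‖z i‖ ≤ β) →
      augLag ρ x₀ (u (k+1)) (x (k+1)) (y k) ≤ augLag ρ x₀ (u (k+1)) z (y k))
    -- multiplier update
    (hy : ∀ k, 1 ≤ k → y (k+1) = y k + ρ • (x (k+1) - x₀ - u (k+1)))
    (hρ2 : 2 ≤ ρ) :
    Filter.Tendsto (fun k => ‖u k - u (k+1)‖^2) Filter.atTop (nhds 0) ∧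
    Filter.Tendsto (fun k => ‖x k - x (k+1)‖^2) Filter.atTop (nhds 0) ∧
    Filter.Tendsto (fun k => ‖y k - y (k+1)‖^2) Filter.atTop (nhds 0) := by
  have hρn : ρ ≠ 0 := ne_of_gt hρ
  have hρ1 : (0:ℝ) < ρ + 1 := by linarith
  have hρ1n : ρ + 1 ≠ 0 := ne_of_gt hρ1
  -- the feasible set and the saddle point
  set XS : Set (EuclideanSpace ℂ (Fin n)) := {z | ∀ i, ‖z i‖ ≤ β} with hXS
  have hXne : XS.Nonempty := ⟨0, fun i => by simpa using hβ.le⟩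
  have hXconv : Convex ℝ XS := by
    intro a ha b hb s t hs ht hst i
    have hcoord : (s • a + t • b) i = s • a i + t • b i := rfl
    show ‖(s • a + t • b) i‖ ≤ β
    rw [hcoord]
    calc ‖s • a i + t • b i‖
        ≤ ‖s • a i‖ + ‖t • b i‖ := norm_add_le _ _
      _ = s * ‖a i‖ + t * ‖b i‖ := by
          rw [norm_smul, norm_smul, Real.norm_eq_abs,
            Real.norm_eq_abs, abs_of_nonneg hs, abs_of_nonneg ht]
      _ ≤ s * β + t * β := add_le_add (mul_le_mul_of_nonneg_left (ha i) hs)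
            (mul_le_mul_of_nonneg_left (hb i) ht)
      _ = β := by rw [← add_mul, hst, one_mul]
  have hXclosed : IsClosed XS := by
    have hrw : XS = ⋂ i, {z : EuclideanSpace ℂ (Fin n) | ‖z i‖ ≤ β} := by
      ext z; simp [hXS, Set.mem_iInter]
    rw [hrw]
    exact isClosed_iInter fun i =>
      isClosed_le (continuous_norm.comp (PiLp.continuous_apply 2 _ i)) continuous_const
  obtain ⟨xs, hxsX, hxs_eq⟩ :=
    exists_norm_eq_iInf_of_complete_convex hXne (hXclosed.isComplete) hXconv x₀
  have hVIstar : ∀ z ∈ XS, ⟪x₀ - xs, z - xs⟫_ℝ ≤ 0 :=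
    (norm_eq_iInf_iff_real_inner_le_zero hXconv hxsX).mp hxs_eq
  set us : EuclideanSpace ℂ (Fin n) := xs - x₀ with hus
  -- consequences of the updates
  have hE1' : ∀ k, 1 ≤ k → y (k+1) = u (k+1) + ρ • (x (k+1) - x k) := by
    intro k hk
    have h1 : (ρ+1) • u (k+1) = y k + ρ • (x k - x₀) := by
      rw [hu k hk]
      match_scalars <;> field_simp <;> ring
    have h2 : y k = (ρ+1) • u (k+1) - ρ • (x k - x₀) := eq_sub_of_add_eq h1.symm
    rw [hy k hk, h2]
    module
  have hVIk : ∀ k, 1 ≤ k → ∀ z : EuclideanSpace ℂ (Fin n), (∀ i, ‖z i‖ ≤ β) →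
      0 ≤ ⟪y (k+1), z - x (k+1)⟫_ℝ := by
    intro k hk z hz
    have h := vi_of_min hρ (hxfeas k hk) hz (hxmin k hk)
    rwa [← hy k hk] at h
  -- Lyapunov sequence
  set W : ℕ → ℝ := fun k => (1/ρ) * ‖y (k+1) - us‖^2 + ρ * ‖x (k+1) - xs‖^2 with hW
  set D : ℕ → ℝ := fun k =>
    2 * ‖u (k+2) - us‖^2 + ρ * ‖(u (k+2) - us) - (x (k+1) - xs)‖^2 with hD
  have key : ∀ k : ℕ, W (k+1) + D k ≤ W k := by
    intro k
    have hk1 : 1 ≤ k + 1 := Nat.le_add_left 1 k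
    have hv1 : (0:ℝ) ≤ ⟪y (k+2), xs - x (k+2)⟫_ℝ := hVIk (k+1) hk1 xs hxsX
    have hv2 : ⟪x₀ - xs, x (k+2) - xs⟫_ℝ ≤ 0 := hVIstar (x (k+2)) (hxfeas (k+1) hk1)
    have hA : ⟪y (k+2) - us, x (k+2) - xs⟫_ℝ ≤ 0 := by
      have e1 : ⟪y (k+2) - us, x (k+2) - xs⟫_ℝ
          = -⟪y (k+2), xs - x (k+2)⟫_ℝ + ⟪x₀ - xs, x (k+2) - xs⟫_ℝ := by
        rw [hus, inner_sub_left]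
        rw [show ⟪y (k+2), x (k+2) - xs⟫_ℝ = -⟪y (k+2), xs - x (k+2)⟫_ℝ by
              rw [← inner_neg_right]; congr 1; abel]
        rw [show ⟪xs - x₀, x (k+2) - xs⟫_ℝ = -⟪x₀ - xs, x (k+2) - xs⟫_ℝ by
              rw [← inner_neg_left]; congr 1; abel]
        ring
      linarith [e1, hv1, hv2]
    have hep : u (k+2) - us = (x (k+2) - xs) - (x (k+2) - x₀ - u (k+2)) := by
      rw [hus]; module
    have heq : u (k+2) - us = (y (k+2) - us) - ρ • (x (k+2) - x (k+1)) := by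
      have hE : y (k+2) = u (k+2) + ρ • (x (k+2) - x (k+1)) := hE1' (k+1) hk1
      rw [hE]; module
    have hq : y (k+1) - us = (y (k+2) - us) - ρ • (x (k+2) - x₀ - u (k+2)) := by
      have hyk : y (k+2) = y (k+1) + ρ • (x (k+2) - x₀ - u (k+2)) := hy (k+1) hk1
      rw [hyk]; module
    have hp : x (k+1) - xs = (x (k+2) - xs) - (x (k+2) - x (k+1)) := by module
    have hkey := key_ineq ρ hρ (y (k+2) - us) (x (k+2) - xs) (x (k+2) - x (k+1))
      (x (k+2) - x₀ - u (k+2)) (u (k+2) - us) (x (k+1) - xs) (y (k+1) - us)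
      hep heq hq hp hA
    simp only [hW, hD]
    exact hkey
  have hD0 : ∀ k, 0 ≤ D k := by
    intro k
    simp only [hD]
    positivity
  have hWanti : Antitone W := antitone_nat_of_succ_le fun k => by linarith [key k, hD0 k]
  have hW0 : ∀ k, 0 ≤ W k := fun k => by simp only [hW]; positivity
  have hWbdd : BddBelow (Set.range W) := by
    refine ⟨0, ?_⟩
    rintro v ⟨k, rfl⟩
    exact hW0 k
  have hWlim := tendsto_atTop_ciInf hWanti hWbdd
  have hWlim' : Tendsto (fun k => W (k+1)) atTop (nhds (⨅ i, W i)) :=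
    hWlim.comp (tendsto_add_atTop_nat 1)
  have hdiff : Tendsto (fun k => W k - W (k+1)) atTop (nhds 0) := by
    have h := hWlim.sub hWlim'
    simpa [Function.comp] using h
  have hDlim : Tendsto D atTop (nhds 0) :=
    squeeze_zero hD0 (fun k => by linarith [key k]) hdiff
  -- component limits
  have hLu : Tendsto (fun k => ‖u (k+2) - us‖^2) atTop (nhds 0) := by
    refine squeeze_zero (fun k => by positivity) (fun k => ?_) hDlim
    simp only [hD]
    nlinarith [sq_nonneg ‖u (k+2) - us‖, sq_nonneg ‖(u (k+2) - us) - (x (k+1) - xs)‖,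
      mul_nonneg hρ.le (sq_nonneg ‖(u (k+2) - us) - (x (k+1) - xs)‖)]
  have hLep : Tendsto (fun k => ‖(u (k+2) - us) - (x (k+1) - xs)‖^2) atTop (nhds 0) := by
    refine squeeze_zero (fun k => by positivity) (fun k => ?_) hDlim
    simp only [hD]
    nlinarith [sq_nonneg ‖u (k+2) - us‖,
      mul_nonneg (by linarith : (0:ℝ) ≤ ρ - 1) (sq_nonneg ‖(u (k+2) - us) - (x (k+1) - xs)‖)]
  have sq_to : ∀ (f : ℕ → EuclideanSpace ℂ (Fin n)) (a : EuclideanSpace ℂ (Fin n)),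
      Tendsto (fun k => ‖f k - a‖^2) atTop (nhds 0) → Tendsto f atTop (nhds a) := by
    intro f a h
    rw [tendsto_iff_norm_sub_tendsto_zero]
    have h2 := (Real.continuous_sqrt.tendsto 0).comp h
    have h3 : (fun k => Real.sqrt (‖f k - a‖^2)) = fun k => ‖f k - a‖ :=
      funext fun k => Real.sqrt_sq (norm_nonneg _)
    have h2' : Tendsto (fun k => Real.sqrt (‖f k - a‖^2)) atTop (nhds 0) := by
      simpa [Function.comp_def] using h2
    rw [h3] at h2'
    exact h2'
  have hu2 : Tendsto (fun k => u (k+2)) atTop (nhds us) := sq_to (fun k => u (k+2)) us hLu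
  have hulim : Tendsto u atTop (nhds us) := (tendsto_add_atTop_iff_nat 2).mp hu2
  have hepv : Tendsto (fun k => (u (k+2) - us) - (x (k+1) - xs)) atTop (nhds 0) := by
    have := sq_to (fun k => (u (k+2) - us) - (x (k+1) - xs)) 0 (by simpa using hLep)
    simpa using this
  have hx1 : Tendsto (fun k => x (k+1)) atTop (nhds xs) := by
    have h1 : Tendsto (fun k => x (k+1) - xs) atTop (nhds 0) := by
      have h2 := (hu2.sub (tendsto_const_nhds (x := us))).sub hepv
      simpa using h2
    have h3 := h1.add (tendsto_const_nhds (x := xs))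
    simpa using h3
  have hxlim : Tendsto x atTop (nhds xs) := (tendsto_add_atTop_iff_nat 1).mp hx1
  have hx2 : Tendsto (fun k => x (k+2)) atTop (nhds xs) :=
    (tendsto_add_atTop_iff_nat 2).mpr hxlim
  have hylim : Tendsto y atTop (nhds us) := by
    have hu1 : Tendsto (fun k => u (k+1)) atTop (nhds us) :=
      (tendsto_add_atTop_iff_nat 1).mpr hulim
    have hval : Tendsto (fun k => u (k+1) + ρ • (x (k+1) - x k)) atTop
        (nhds (us + ρ • (xs - xs))) := hu1.add ((hx1.sub hxlim).const_smul ρ)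
    have hval' : Tendsto (fun k => u (k+1) + ρ • (x (k+1) - x k)) atTop (nhds us) := by
      simpa using hval
    have heq : (fun k => u (k+1) + ρ • (x (k+1) - x k)) =ᶠ[atTop] (fun k => y (k+1)) := by
      filter_upwards [eventually_ge_atTop 1] with k hk
      exact (hE1' k hk).symm
    have := hval'.congr' heq
    exact (tendsto_add_atTop_iff_nat 1).mp this
  have final : ∀ (f : ℕ → EuclideanSpace ℂ (Fin n)) (a : EuclideanSpace ℂ (Fin n)),
      Tendsto f atTop (nhds a) →
      Tendsto (fun k => ‖f k - f (k+1)‖^2) atTop (nhds 0) := by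
    intro f a hf
    have h1 : Tendsto (fun k => f (k+1)) atTop (nhds a) :=
      (tendsto_add_atTop_iff_nat 1).mpr hf
    have h2 : Tendsto (fun k => f k - f (k+1)) atTop (nhds (a - a)) := hf.sub h1
    have h3 : Tendsto (fun k => ‖f k - f (k+1)‖) atTop (nhds 0) := by
      have := h2.norm
      simpa using this
    have h4 := h3.pow 2
    simpa using h4
  exact ⟨final u us hulim, final x xs hxlim, final y us hylim⟩
end

section
/- (Theorem 1) Let (u^k, x^k, y^k), k ≥ 1, be the sequence generated by the T-ADMM algorithm. If the penalty parameter satisfies ρ ≥ 2, then there exist u*, x*, y* ∈ ℂⁿ such that u^{k+1} → u*, x^{k+1} → x*, and y^{k+1} → y* as k → ∞, and moreover x^{k+1} − x₀ − u^{k+1} → 0 as k → ∞. -/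
open scoped InnerProductSpace

noncomputable def clipC (β : ℝ) (c : ℂ) : ℂ := if ‖c‖ ≤ β then c else (β * ‖c‖⁻¹ : ℝ) • c

lemma clipC_norm_le {β : ℝ} (hβ : 0 < β) (c : ℂ) : ‖clipC β c‖ ≤ β := by
  unfold clipC
  split_ifs with h
  · exact h
  · push_neg at h
    have hc : 0 < ‖c‖ := lt_trans hβ h
    rw [norm_smul, Real.norm_eq_abs, abs_of_nonneg (by positivity)]
    rw [mul_assoc, inv_mul_cancel₀ hc.ne', mul_one]

lemma clipC_vi {β : ℝ} (hβ : 0 < β) (c z : ℂ) (hz : ‖z‖ ≤ β) :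
    ((starRingEnd ℂ) (c - clipC β c) * (z - clipC β c)).re ≤ 0 := by
  unfold clipC
  split_ifs with h
  · simp
  · push_neg at h
    have hc : 0 < ‖c‖ := lt_trans hβ h
    have h1 : c - (β * ‖c‖⁻¹ : ℝ) • c = ((1 - β * ‖c‖⁻¹ : ℝ)) • c := by
      rw [sub_smul, one_smul]
    rw [h1]
    have hre : ((starRingEnd ℂ) c * z).re ≤ ‖c‖ * β := by
      calc ((starRingEnd ℂ) c * z).re ≤ ‖(starRingEnd ℂ) c * z‖ := Complex.re_le_norm _
        _ = ‖c‖ * ‖z‖ := by rw [norm_mul, RCLike.norm_conj]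
        _ ≤ ‖c‖ * β := by nlinarith
    have hcc : (starRingEnd ℂ) c * c = ((‖c‖^2 : ℝ) : ℂ) := by
      rw [mul_comm, Complex.mul_conj, Complex.normSq_eq_norm_sq]
    have key : ((starRingEnd ℂ) (((1 - β * ‖c‖⁻¹ : ℝ)) • c) * (z - (β * ‖c‖⁻¹ : ℝ) • c)).re
        = (1 - β * ‖c‖⁻¹) * (((starRingEnd ℂ) c * z).re - (β * ‖c‖⁻¹) * ‖c‖^2) := by
      simp only [Complex.real_smul, map_mul, Complex.conj_ofReal, mul_sub]
      have expand : (↑(1 - β * ‖c‖⁻¹) * (starRingEnd ℂ) c * z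
          - ↑(1 - β * ‖c‖⁻¹) * (starRingEnd ℂ) c * (↑(β * ‖c‖⁻¹) * c))
          = ↑(1 - β * ‖c‖⁻¹) * ((starRingEnd ℂ) c * z)
            - ↑(1 - β * ‖c‖⁻¹) * (↑(β * ‖c‖⁻¹) * ((‖c‖^2:ℝ):ℂ)) := by
        rw [← hcc]; ring
      rw [expand]
      rw [← Complex.ofReal_mul, Complex.sub_re, Complex.re_ofReal_mul, Complex.re_ofReal_mul,
        Complex.ofReal_re]
    rw [key]
    have hr0 : (0:ℝ) ≤ 1 - β * ‖c‖⁻¹ := by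
      rw [sub_nonneg, ← div_eq_mul_inv, div_le_one hc]; exact h.le
    have h2 : ((starRingEnd ℂ) c * z).re - (β * ‖c‖⁻¹) * ‖c‖^2 ≤ 0 := by
      have h3 : (β * ‖c‖⁻¹) * ‖c‖^2 = ‖c‖ * β := by
        rw [sq, ← mul_assoc, mul_assoc β, inv_mul_cancel₀ hc.ne', mul_one, mul_comm]
      rw [h3]; linarith
    exact mul_nonpos_of_nonneg_of_nonpos hr0 h2

lemma clipC_nonexp {β : ℝ} (hβ : 0 < β) (a b : ℂ) :
    ‖clipC β a - clipC β b‖ ≤ ‖a - b‖ := by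
  have h1 := clipC_vi hβ a (clipC β b) (clipC_norm_le hβ b)
  have h2 := clipC_vi hβ b (clipC β a) (clipC_norm_le hβ a)
  set qa := clipC β a; set qb := clipC β b
  have key : ‖qa - qb‖^2 ≤ ((starRingEnd ℂ) (a - b) * (qa - qb)).re := by
    have e1 : (starRingEnd ℂ) (a - b) * (qa - qb)
        = - ((starRingEnd ℂ) (a - qa) * (qb - qa)) - ((starRingEnd ℂ) (b - qb) * (qa - qb))
          + (starRingEnd ℂ) (qa - qb) * (qa - qb) := by
      simp only [map_sub]; ring
    have e2 : ((starRingEnd ℂ) (qa - qb) * (qa - qb)).re = ‖qa - qb‖^2 := by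
      rw [mul_comm, Complex.mul_conj, Complex.normSq_eq_norm_sq]
      norm_cast
    rw [e1]
    simp only [Complex.add_re, Complex.sub_re, Complex.neg_re, e2]
    linarith
  have hb : ((starRingEnd ℂ) (a - b) * (qa - qb)).re ≤ ‖a - b‖ * ‖qa - qb‖ := by
    calc ((starRingEnd ℂ) (a - b) * (qa - qb)).re ≤ ‖(starRingEnd ℂ) (a - b) * (qa - qb)‖ :=
          Complex.re_le_norm _
      _ = ‖a - b‖ * ‖qa - qb‖ := by rw [norm_mul, RCLike.norm_conj]
  rcases eq_or_lt_of_le (norm_nonneg (qa - qb)) with h | h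
  · rw [← h]; positivity
  · have := le_trans key hb
    nlinarith

variable {n : ℕ}

noncomputable def QX (β : ℝ) (w : EuclideanSpace ℂ (Fin n)) : EuclideanSpace ℂ (Fin n) :=
  WithLp.toLp 2 (fun i => clipC β (w i))

lemma QX_feas {β : ℝ} (hβ : 0 < β) (w : EuclideanSpace ℂ (Fin n)) (i : Fin n) :
    ‖QX β w i‖ ≤ β := clipC_norm_le hβ _

lemma QX_vi {β : ℝ} (hβ : 0 < β) (w z : EuclideanSpace ℂ (Fin n)) (hz : ∀ i, ‖z i‖ ≤ β) :
    (⟪w - QX β w, z - QX β w⟫_ℂ).re ≤ 0 := by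
  rw [PiLp.inner_apply, Complex.re_sum]
  refine Finset.sum_nonpos fun i _ => ?_
  have h := clipC_vi hβ (w i) (z i) (hz i)
  calc _ = ((starRingEnd ℂ) (w i - clipC β (w i)) * (z i - clipC β (w i))).re := by
        simp [QX, RCLike.inner_apply, mul_comm]
    _ ≤ 0 := h

lemma QX_nonexp {β : ℝ} (hβ : 0 < β) (a b : EuclideanSpace ℂ (Fin n)) :
    ‖QX β a - QX β b‖ ≤ ‖a - b‖ := by
  rw [EuclideanSpace.norm_eq, EuclideanSpace.norm_eq]
  apply Real.sqrt_le_sqrt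
  refine Finset.sum_le_sum fun i _ => ?_
  have h1 : (QX β a - QX β b) i = clipC β (a i) - clipC β (b i) := by simp [QX]
  have h2 : (a - b) i = a i - b i := rfl
  rw [h1, h2]
  have := clipC_nonexp hβ (a i) (b i)
  have h0 : (0:ℝ) ≤ ‖clipC β (a i) - clipC β (b i)‖ := norm_nonneg _
  nlinarith [this]

lemma augLag_eq (ρ : ℝ) (hρ : 0 < ρ) (x₀ u z y : EuclideanSpace ℂ (Fin n)) :
    augLag ρ x₀ u z y
      = (ρ/2) * ‖z - (x₀ + u - ρ⁻¹ • y)‖^2 + ((1/2)*‖u‖^2 - ‖y‖^2/(2*ρ)) := by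
  have hd : z - (x₀ + u - ρ⁻¹ • y) = (z - x₀ - u) + ρ⁻¹ • y := by abel
  rw [hd, norm_add_sq (𝕜 := ℂ)]
  simp only [RCLike.re_to_complex]
  have h1 : (⟪z - x₀ - u, ρ⁻¹ • y⟫_ℂ) = (ρ⁻¹ : ℝ) • ⟪z - x₀ - u, y⟫_ℂ :=
    inner_smul_real_right _ _ _
  have h2 : ‖ρ⁻¹ • y‖ = ρ⁻¹ * ‖y‖ := by
    rw [norm_smul, Real.norm_eq_abs, abs_of_pos (by positivity)]
  rw [h1, h2]
  have h3 : (Complex.re (⟪z - x₀ - u, y⟫_ℂ)) = (⟪y, z - x₀ - u⟫_ℂ).re := by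
    simpa only [RCLike.re_to_complex] using inner_re_symm (𝕜 := ℂ) (z - x₀ - u) y
  unfold augLag
  rw [Complex.smul_re, h3]
  field_simp
  linear_combination (-2 * ρ * (⟪y, z - x₀ - u⟫_ℂ).re) * mul_inv_cancel₀ hρ.ne'

lemma proj_unique {β : ℝ} (hβ : 0 < β) (w v : EuclideanSpace ℂ (Fin n))
    (hfeas : ∀ i, ‖v i‖ ≤ β) (hmin : ‖v - w‖^2 ≤ ‖QX β w - w‖^2) : v = QX β w := by
  have hexp : ‖v - w‖^2
      = ‖v - QX β w‖^2 + 2 * (⟪v - QX β w, QX β w - w⟫_ℂ).re + ‖QX β w - w‖^2 := by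
    have : v - w = (v - QX β w) + (QX β w - w) := by abel
    rw [this, norm_add_sq (𝕜 := ℂ)]
    simp only [RCLike.re_to_complex]
  have hvi : (⟪w - QX β w, v - QX β w⟫_ℂ).re ≤ 0 := QX_vi hβ w v hfeas
  have hsym : (⟪v - QX β w, QX β w - w⟫_ℂ).re = - (⟪w - QX β w, v - QX β w⟫_ℂ).re := by
    have hs : (⟪v - QX β w, QX β w - w⟫_ℂ).re = (⟪QX β w - w, v - QX β w⟫_ℂ).re := by
      simpa only [RCLike.re_to_complex] using inner_re_symm (𝕜 := ℂ) (v - QX β w) (QX β w - w)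
    have hn : (⟪QX β w - w, v - QX β w⟫_ℂ) = - ⟪w - QX β w, v - QX β w⟫_ℂ := by
      rw [← inner_neg_left, neg_sub]
    rw [hs, hn, Complex.neg_re]
  have hz : ‖v - QX β w‖^2 ≤ 0 := by
    rw [hexp] at hmin
    rw [hsym] at hmin
    linarith
  have : ‖v - QX β w‖ = 0 := by nlinarith [norm_nonneg (v - QX β w)]
  rw [norm_eq_zero, sub_eq_zero] at this
  exact this

noncomputable def Fmap (ρ β : ℝ) (x₀ t : EuclideanSpace ℂ (Fin n)) : EuclideanSpace ℂ (Fin n) :=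
  (ρ+1)⁻¹ • t + ((ρ-1)/(ρ+1)) • (QX β (x₀ + t) - x₀)

/-- Theorem 1 of the paper: convergence of T-ADMM when `ρ ≥ 2`. -/
theorem stmt_13 (ρ : ℝ) (hρ : 0 < ρ)
    {n : ℕ} (x₀ : EuclideanSpace ℂ (Fin n)) (β : ℝ) (hβ : 0 < β)
    (u x y : ℕ → EuclideanSpace ℂ (Fin n))
    -- `u`-update: the unique minimizer of `u ↦ L_ρ(u, xᵏ, yᵏ)`
    (hu : ∀ k, 1 ≤ k → u (k+1) = (ρ/(ρ+1)) • (x k - x₀ + ρ⁻¹ • y k))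
    -- `x`-update: a minimizer of `x ↦ L_ρ(uᵏ⁺¹, x, yᵏ)` over `X = {x : maxᵢ |xᵢ| ≤ β}`
    (hxfeas : ∀ k, 1 ≤ k → ∀ i, ‖x (k+1) i‖ ≤ β)
    (hxmin : ∀ k, 1 ≤ k → ∀ z : EuclideanSpace ℂ (Fin n), (∀ i, ‖z i‖ ≤ β) →
      augLag ρ x₀ (u (k+1)) (x (k+1)) (y k) ≤ augLag ρ x₀ (u (k+1)) z (y k))
    -- multiplier update
    (hy : ∀ k, 1 ≤ k → y (k+1) = y k + ρ • (x (k+1) - x₀ - u (k+1)))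
    (hρ2 : 2 ≤ ρ) :
    ∃ ustar xstar ystar : EuclideanSpace ℂ (Fin n),
      Filter.Tendsto (fun k => u (k+1)) Filter.atTop (nhds ustar) ∧
      Filter.Tendsto (fun k => x (k+1)) Filter.atTop (nhds xstar) ∧
      Filter.Tendsto (fun k => y (k+1)) Filter.atTop (nhds ystar) ∧
      Filter.Tendsto (fun k => x (k+1) - x₀ - u (k+1)) Filter.atTop (nhds 0) := by
  have hρ0 : ρ ≠ 0 := hρ.ne'
  have hρ1 : (0:ℝ) < ρ + 1 := by linarith
  have hρ1' : ρ + 1 ≠ 0 := hρ1.ne'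
  -- Step A: identification of the x-update with clipping
  have stepA : ∀ k, 1 ≤ k → x (k+1) = QX β (x₀ + (u (k+1) - ρ⁻¹ • y k)) := by
    intro k hk
    set w : EuclideanSpace ℂ (Fin n) := x₀ + (u (k+1) - ρ⁻¹ • y k) with hw
    have hfe : ∀ i, ‖(QX β w) i‖ ≤ β := by
      intro i
      exact QX_feas hβ w i
    have hle := hxmin k hk (QX β w) hfe
    rw [augLag_eq ρ hρ, augLag_eq ρ hρ] at hle
    have hw' : x₀ + u (k+1) - ρ⁻¹ • y k = w := by rw [hw]; abel
    rw [hw'] at hle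
    have hsq : ‖x (k+1) - w‖^2 ≤ ‖QX β w - w‖^2 := by
      have h2 : (0:ℝ) < ρ/2 := by linarith
      nlinarith [hle]
    refine proj_unique hβ w (x (k+1)) ?_ hsq
    intro i
    exact hxfeas k hk i
  -- The driving sequence
  set g : ℕ → EuclideanSpace ℂ (Fin n) := fun m => u (m+2) - ρ⁻¹ • y (m+1) with hgdef
  -- Step B: recursion g (m+1) = Fmap (g m)
  have stepB : ∀ m, g (m+1) = Fmap ρ β x₀ (g m) := by
    intro m
    have hxq : QX β (x₀ + (u (m+2) - ρ⁻¹ • y (m+1))) = x (m+2) :=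
      (stepA (m+1) (by omega)).symm
    have hu' := hu (m+2) (by omega)
    have hy' := hy (m+1) (by omega)
    show u (m+3) - ρ⁻¹ • y (m+2)
        = (ρ+1)⁻¹ • (u (m+2) - ρ⁻¹ • y (m+1))
          + ((ρ-1)/(ρ+1)) • (QX β (x₀ + (u (m+2) - ρ⁻¹ • y (m+1))) - x₀)
    rw [hxq]
    have h3 : u (m+3) = (ρ/(ρ+1)) • (x (m+2) - x₀ + ρ⁻¹ • y (m+2)) := hu'
    rw [h3, hy']
    match_scalars <;> field_simp <;> ring
  -- Step C: contraction
  have hKlip : ∀ a b : EuclideanSpace ℂ (Fin n),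
      ‖Fmap ρ β x₀ a - Fmap ρ β x₀ b‖ ≤ (ρ/(ρ+1)) * ‖a - b‖ := by
    intro a b
    have hdiff : Fmap ρ β x₀ a - Fmap ρ β x₀ b
        = (ρ+1)⁻¹ • (a - b) + ((ρ-1)/(ρ+1)) • (QX β (x₀ + a) - QX β (x₀ + b)) := by
      unfold Fmap; module
    have hQ : ‖QX β (x₀ + a) - QX β (x₀ + b)‖ ≤ ‖a - b‖ := by
      have := QX_nonexp hβ (x₀ + a) (x₀ + b)
      rwa [add_sub_add_left_eq_sub] at this
    calc ‖Fmap ρ β x₀ a - Fmap ρ β x₀ b‖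
        ≤ ‖(ρ+1)⁻¹ • (a - b)‖ + ‖((ρ-1)/(ρ+1)) • (QX β (x₀ + a) - QX β (x₀ + b))‖ := by
          rw [hdiff]; exact norm_add_le _ _
      _ ≤ (ρ+1)⁻¹ * ‖a - b‖ + ((ρ-1)/(ρ+1)) * ‖a - b‖ := by
          rw [norm_smul, norm_smul, Real.norm_eq_abs, Real.norm_eq_abs,
            abs_of_nonneg (by positivity),
            abs_of_nonneg (div_nonneg (by linarith) (by linarith))]
          gcongr
          exact div_nonneg (by linarith) (by linarith)
      _ = (ρ/(ρ+1)) * ‖a - b‖ := by field_simp; ring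
  set K : NNReal := ⟨ρ/(ρ+1), by positivity⟩ with hKdef
  have hC : ContractingWith K (Fmap ρ β x₀ (n := n)) := by
    constructor
    · rw [← NNReal.coe_lt_coe]
      show ρ/(ρ+1) < (1 : ℝ)
      rw [div_lt_one hρ1]; linarith
    · refine LipschitzWith.of_dist_le_mul fun a b => ?_
      rw [dist_eq_norm, dist_eq_norm]
      exact hKlip a b
  have hiter : ∀ m, g m = (Fmap ρ β x₀ (n := n))^[m] (g 0) := by
    intro m
    induction m with
    | zero => rfl
    | succ m ih => rw [Function.iterate_succ_apply', ← ih, stepB]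
  set tstar := ContractingWith.fixedPoint (Fmap ρ β x₀ (n := n)) hC with htstar
  have hgt : Filter.Tendsto g Filter.atTop (nhds tstar) := by
    have h := hC.tendsto_iterate_fixedPoint (g 0)
    have he : (fun m => (Fmap ρ β x₀ (n := n))^[m] (g 0)) = g := funext fun m => (hiter m).symm
    rwa [he] at h
  -- continuity of the clipping map
  have hQcont : Continuous (fun t : EuclideanSpace ℂ (Fin n) => QX β (x₀ + t)) := by
    have lip : LipschitzWith 1 (QX β (n := n)) := by
      refine LipschitzWith.of_dist_le_mul fun a b => ?_
      rw [dist_eq_norm, dist_eq_norm, NNReal.coe_one, one_mul]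
      exact QX_nonexp hβ a b
    exact lip.continuous.comp (continuous_const.add continuous_id)
  -- limits
  set xstar := QX β (x₀ + tstar) with hxstar
  have hx2 : ∀ k : ℕ, x (k+2) = QX β (x₀ + g k) := fun k => stepA (k+1) (by omega)
  have hxlim2 : Filter.Tendsto (fun k => x (k+2)) Filter.atTop (nhds xstar) := by
    have h := (hQcont.tendsto tstar).comp hgt
    exact h.congr fun k => (hx2 k).symm
  have hxlim : Filter.Tendsto (fun k => x (k+1)) Filter.atTop (nhds xstar) :=
    (Filter.tendsto_add_atTop_iff_nat (f := fun k => x (k+1)) 1).mp hxlim2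
  set ystar := ρ • (xstar - x₀ - tstar) with hystar
  have hy2 : ∀ k : ℕ, y (k+2) = ρ • ((x (k+2) - x₀) - g k) := by
    intro k
    have hy' := hy (k+1) (by omega)
    rw [hgdef]
    show y (k+2) = ρ • ((x (k+2) - x₀) - (u (k+2) - ρ⁻¹ • y (k+1)))
    rw [hy']
    match_scalars <;> field_simp
  have hylim2 : Filter.Tendsto (fun k => y (k+2)) Filter.atTop (nhds ystar) := by
    have h : Filter.Tendsto (fun k => ρ • ((x (k+2) - x₀) - g k)) Filter.atTop
        (nhds (ρ • ((xstar - x₀) - tstar))) :=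
      ((hxlim2.sub tendsto_const_nhds).sub hgt).const_smul ρ
    have he : ρ • ((xstar - x₀) - tstar) = ystar := by rw [hystar]
    rw [he] at h
    exact h.congr fun k => (hy2 k).symm
  have hylim : Filter.Tendsto (fun k => y (k+1)) Filter.atTop (nhds ystar) :=
    (Filter.tendsto_add_atTop_iff_nat (f := fun k => y (k+1)) 1).mp hylim2
  set ustar := tstar + ρ⁻¹ • ystar with hustar
  have hulim2 : Filter.Tendsto (fun k => u (k+2)) Filter.atTop (nhds ustar) := by
    have h : Filter.Tendsto (fun k => g k + ρ⁻¹ • y (k+1)) Filter.atTop (nhds ustar) :=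
      hgt.add (hylim.const_smul ρ⁻¹)
    refine h.congr fun k => ?_
    show u (k+2) - ρ⁻¹ • y (k+1) + ρ⁻¹ • y (k+1) = u (k+2)
    module
  have hulim : Filter.Tendsto (fun k => u (k+1)) Filter.atTop (nhds ustar) :=
    (Filter.tendsto_add_atTop_iff_nat (f := fun k => u (k+1)) 1).mp hulim2
  have hres0 : xstar - x₀ - ustar = 0 := by
    rw [hustar, hystar, smul_smul, inv_mul_cancel₀ hρ0, one_smul]
    abel
  refine ⟨ustar, xstar, ystar, hulim, hxlim, hylim, ?_⟩
  have h : Filter.Tendsto (fun k => x (k+1) - x₀ - u (k+1)) Filter.atTop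
      (nhds (xstar - x₀ - ustar)) := (hxlim.sub tendsto_const_nhds).sub hulim
  rwa [hres0] at h
end
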